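/- Let A₁,…,A_N be pairwise anticommuting self-adjoint unitaries and ψ a unit vector with ∑ᵢ hᵢ⟨ψ, Aᵢψ⟩ = ±1 for some real coefficients with ∑ᵢ hᵢ² = 1. Then ⟨ψ, Aᵢψ⟩ = ±hᵢ for all i (with a single global sign), and in particular ∑ᵢ ⟨ψ, Aᵢψ⟩² = 1. -/

import Mathlib

open Matrix

private lemma dotProduct_sum' {n d : ℕ} (v : Fin d → ℂ) (w : Fin n → Fin d → ℂ) :
    v ⬝ᵥ (∑ i, w i) = ∑ i, v ⬝ᵥ w i := by
  simp only [dotProduct, Finset.sum_apply, Finset.mul_sum]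
  rw [Finset.sum_comm]

private lemma sum_mulVec' {n d : ℕ} (f : Fin n → Matrix (Fin d) (Fin d) ℂ) (v : Fin d → ℂ) :
    (∑ i, f i) *ᵥ v = ∑ i, f i *ᵥ v := by
  ext k
  simp only [mulVec, dotProduct, Matrix.sum_apply, Finset.sum_apply, Finset.sum_mul]
  rw [Finset.sum_comm]

theorem stmt3 {d N : ℕ} (A : Fin N → Matrix (Fin d) (Fin d) ℂ)
    (hsa : ∀ i, (A i)ᴴ = A i) (hunit : ∀ i, A i * A i = 1)
    (hanti : ∀ i j, i ≠ j → A i * A j = -(A j * A i))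
    (ψ : Fin d → ℂ) (hψ : star ψ ⬝ᵥ ψ = 1)
    (h : Fin N → ℝ) (hnorm : ∑ i, (h i) ^ 2 = 1)
    (s : ℝ) (hs : s = 1 ∨ s = -1)
    (hsum : ∑ i, h i * (star ψ ⬝ᵥ (A i).mulVec ψ).re = s) :
    (∀ i, (star ψ ⬝ᵥ (A i).mulVec ψ).re = s * h i) ∧
    ∑ i, ((star ψ ⬝ᵥ (A i).mulVec ψ).re) ^ 2 = 1 := by
  set a : Fin N → ℝ := fun i => (star ψ ⬝ᵥ (A i).mulVec ψ).re with ha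
  -- each expectation is real
  have hreal : ∀ i, (star ψ ⬝ᵥ (A i).mulVec ψ) = (a i : ℂ) := by
    intro i
    have key : star (star ψ ⬝ᵥ (A i) *ᵥ ψ) = star ψ ⬝ᵥ (A i) *ᵥ ψ := by
      conv_lhs => rw [← star_dotProduct_star, star_mulVec, star_star, hsa i,
        ← dotProduct_mulVec]
    have := Complex.conj_eq_iff_re.mp key
    exact this.symm
  set t : ℝ := ∑ i, a i ^ 2 with ht
  have ht0 : 0 ≤ t := Finset.sum_nonneg fun i _ => sq_nonneg _
  set B : Matrix (Fin d) (Fin d) ℂ := ∑ i, (a i : ℂ) • A i with hB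
  have hBH : Bᴴ = B := by
    rw [hB, conjTranspose_sum]
    refine Finset.sum_congr rfl fun i _ => ?_
    rw [conjTranspose_smul, hsa i, Complex.star_def, Complex.conj_ofReal]
  -- B * B = t • 1
  have hB2 : B * B = (t : ℂ) • 1 := by
    have expand : B * B = ∑ i, ∑ j, ((a i : ℂ) * (a j : ℂ)) • (A i * A j) := by
      rw [hB, Finset.sum_mul_sum]
      exact Finset.sum_congr rfl fun i _ => Finset.sum_congr rfl fun j _ =>
        smul_mul_smul_comm _ _ _ _
    have expand' : B * B = ∑ i, ∑ j, ((a i : ℂ) * (a j : ℂ)) • (A j * A i) := by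
      conv_lhs => rw [expand]
      rw [Finset.sum_comm]
      exact Finset.sum_congr rfl fun i _ => Finset.sum_congr rfl fun j _ => by
        rw [mul_comm ((a j : ℂ)) ((a i : ℂ))]
    have two_eq : B * B + B * B = ((2 : ℂ) * (t : ℂ)) • 1 := by
      nth_rewrite 2 [expand']
      rw [expand, ← Finset.sum_add_distrib]
      have : ∀ i : Fin N, ((∑ j, ((a i : ℂ) * (a j : ℂ)) • (A i * A j)) +
          ∑ j, ((a i : ℂ) * (a j : ℂ)) • (A j * A i)) =
          ((2 : ℂ) * ((a i : ℂ) * (a i : ℂ))) • 1 := by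
        intro i
        rw [← Finset.sum_add_distrib]
        rw [Finset.sum_eq_single i]
        · rw [← smul_add, hunit i, two_mul, add_smul, smul_add]
        · intro j _ hj
          rw [hanti i j (Ne.symm hj)]
          simp
        · simp
      rw [Finset.sum_congr rfl fun i _ => this i, ← Finset.sum_smul, ← Finset.mul_sum]
      congr 1
      push_cast [ht]
      ring_nf
    have : (2 : ℂ) • (B * B) = (2 : ℂ) • ((t : ℂ) • 1) := by
      rw [two_smul, two_eq, smul_smul]
    exact smul_right_injective _ (two_ne_zero) this
  -- ⟨ψ, B ψ⟩ = t
  have hBv : B *ᵥ ψ = ∑ i, (a i : ℂ) • ((A i) *ᵥ ψ) := by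
    rw [hB, sum_mulVec']
    exact Finset.sum_congr rfl fun i _ => smul_mulVec _ _ _
  have hinner1 : star ψ ⬝ᵥ B *ᵥ ψ = (t : ℂ) := by
    rw [hBv, dotProduct_sum']
    have : ∀ i : Fin N, star ψ ⬝ᵥ ((a i : ℂ) • ((A i) *ᵥ ψ)) = ((a i : ℂ))^2 := by
      intro i
      rw [dotProduct_smul, smul_eq_mul, hreal i, sq]
    rw [Finset.sum_congr rfl fun i _ => this i]
    push_cast [ht]
    ring_nf
  -- ⟨B ψ, B ψ⟩ = t
  have hinner2 : star (B *ᵥ ψ) ⬝ᵥ (B *ᵥ ψ) = (t : ℂ) := by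
    rw [star_mulVec, hBH, ← dotProduct_mulVec, mulVec_mulVec, hB2]
    rw [smul_mulVec, one_mulVec, dotProduct_smul, smul_eq_mul, hψ, mul_one]
  -- Cauchy–Schwarz : t ≤ 1
  have htle : t ≤ 1 := by
    set x : EuclideanSpace ℂ (Fin d) := (WithLp.equiv 2 _).symm ψ with hx
    set y : EuclideanSpace ℂ (Fin d) := (WithLp.equiv 2 _).symm (B *ᵥ ψ) with hy
    have hxy : inner ℂ x y = (t : ℂ) := by
      rw [hx, hy, WithLp.equiv_symm_apply, EuclideanSpace.inner_toLp_toLp, dotProduct_comm, hinner1]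
    have hxx : ‖x‖ = 1 := by
      have : inner ℂ x x = (1 : ℂ) := by
        rw [hx, WithLp.equiv_symm_apply, EuclideanSpace.inner_toLp_toLp, dotProduct_comm, hψ]
      have h2 : (‖x‖ : ℝ)^2 = 1 := by
        have := inner_self_eq_norm_sq (𝕜 := ℂ) x
        rw [this] at *
        have := congrArg Complex.re ‹inner ℂ x x = (1:ℂ)›
        simpa [← inner_self_eq_norm_sq (𝕜 := ℂ) x] using this
      nlinarith [norm_nonneg x]
    have hyy : ‖y‖^2 = t := by
      have : inner ℂ y y = (t : ℂ) := by
        rw [hy, WithLp.equiv_symm_apply, EuclideanSpace.inner_toLp_toLp, dotProduct_comm]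
        exact hinner2
      have := congrArg Complex.re this
      simpa [← inner_self_eq_norm_sq (𝕜 := ℂ) y] using this
    have hcs := norm_inner_le_norm (𝕜 := ℂ) x y
    rw [hxy, hxx, one_mul] at hcs
    have habs : ‖(t : ℂ)‖ = t := by
      rw [Complex.norm_real, Real.norm_of_nonneg ht0]
    rw [habs] at hcs
    -- t ≤ ‖y‖ and ‖y‖^2 = t
    nlinarith [norm_nonneg y, sq_nonneg (‖y‖ - 1)]
  -- final step
  have hs2 : s ^ 2 = 1 := by rcases hs with rfl | rfl <;> norm_num
  have key : ∑ i, (a i - s * h i) ^ 2 = t - 1 := by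
    have expand : ∀ i : Fin N, (a i - s * h i)^2 =
        a i ^ 2 - 2 * s * (h i * a i) + s^2 * h i ^ 2 := by intro i; ring
    rw [Finset.sum_congr rfl fun i _ => expand i, Finset.sum_add_distrib,
      Finset.sum_sub_distrib, ← Finset.mul_sum, ← Finset.mul_sum, hsum, hnorm, hs2]
    rw [← ht]
    ring_nf
    nlinarith [hs2]
  have hsumz : ∑ i, (a i - s * h i) ^ 2 = 0 := by
    have h1 : (0:ℝ) ≤ ∑ i, (a i - s * h i) ^ 2 :=
      Finset.sum_nonneg fun i _ => sq_nonneg _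
    linarith [key, htle]
  constructor
  · intro i
    have := (Finset.sum_eq_zero_iff_of_nonneg (fun i _ => sq_nonneg (a i - s * h i))).mp
      hsumz i (Finset.mem_univ i)
    have := pow_eq_zero_iff (n := 2) (by norm_num) |>.mp this
    have : a i = s * h i := by linarith [sub_eq_zero.mp this]
    simpa [ha] using this
  · have : t = 1 := by linarith [key, hsumz]
    simpa [ht, ha] using this
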